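/- Norm preservation: let I ⊆ ℝ be an interval containing t0, let w : I → ℍ be continuous with vanishing real part (Re w(t) = 0 for all t ∈ I), and let q : I → ℍ be differentiable with q'(t) = w(t)·q(t) on I and ‖q(t0)‖ = 1. Then ‖q(t)‖ = 1 for all t ∈ I. -/

import Mathlib

open Quaternion Set

/-- The imaginary quaternion unit `i`. -/
noncomputable def e1 : ℍ[ℝ] := ⟨0, 1, 0, 0⟩
/-- The imaginary quaternion unit `j`. -/
noncomputable def e2 : ℍ[ℝ] := ⟨0, 0, 1, 0⟩
/-- The imaginary quaternion unit `k`. -/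
noncomputable def e3 : ℍ[ℝ] := ⟨0, 0, 0, 1⟩

/-- `qexp φ = exp (φ e1) = cos φ + (sin φ) e1`. -/
noncomputable def qexp (φ : ℝ) : ℍ[ℝ] :=
  (Real.cos φ : ℍ[ℝ]) + (Real.sin φ : ℍ[ℝ]) * e1

/-- Quaternion conjugation as a continuous linear map. -/
noncomputable def starCLM : ℍ[ℝ] →L[ℝ] ℍ[ℝ] where
  toFun := star
  map_add' := star_add
  map_smul' := fun r a => by
    ext <;> simp [QuaternionAlgebra.re_smul, QuaternionAlgebra.imI_smul,
      QuaternionAlgebra.imJ_smul, QuaternionAlgebra.imK_smul, mul_comm]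
  cont := continuous_star

/-- The real-part map as a continuous linear map. -/
noncomputable def reCLM : ℍ[ℝ] →L[ℝ] ℝ :=
  { toLinearMap := QuaternionAlgebra.reₗ _ _ _
    cont := Quaternion.continuous_re }

theorem stmt_18
    (I : Set ℝ) (hI : I.OrdConnected) (t0 : ℝ) (ht0 : t0 ∈ I)
    (w : ℝ → ℍ[ℝ]) (hw : ContinuousOn w I)
    (hwre : ∀ t ∈ I, (w t).re = 0)
    (q : ℝ → ℍ[ℝ])
    (hq : ∀ t ∈ I, HasDerivAt q (w t * q t) t)
    (hq0 : ‖q t0‖ = 1) :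
    ∀ t ∈ I, ‖q t‖ = 1 := by
  set f : ℝ → ℝ := fun t => (q t * star (q t)).re with hf
  have hfd : ∀ t ∈ I, HasDerivAt f 0 t := by
    intro t ht
    have h1 : HasDerivAt (fun s => q s * star (q s))
        (w t * q t * star (q t) + q t * star (w t * q t)) t :=
      (hq t ht).mul (starCLM.hasFDerivAt.comp_hasDerivAt t (hq t ht))
    have h2 := reCLM.hasFDerivAt.comp_hasDerivAt t h1
    have hz : reCLM (w t * q t * star (q t) + q t * star (w t * q t)) = 0 := by
      have hqq : q t * star (q t) = ((Quaternion.normSq (q t) : ℝ) : ℍ[ℝ]) :=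
        Quaternion.self_mul_star (q t)
      have : reCLM (w t * q t * star (q t) + q t * star (w t * q t)) =
          (w t * (q t * star (q t))).re + (q t * star (q t) * star (w t)).re := by
        show (w t * q t * star (q t) + q t * star (w t * q t)).re = _
        simp [reCLM, QuaternionAlgebra.reₗ, mul_assoc, star_mul]
      rw [this, hqq]
      simp [Quaternion.re_mul, hwre t ht]
    rw [hz] at h2
    exact h2
  have hcont : ∀ t ∈ I, ContinuousAt f t := fun t ht => (hfd t ht).continuousAt
  have key : ∀ t ∈ I, f t = f t0 := by
    intro t ht
    rcases le_total t0 t with h | h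
    · have hsub : Icc t0 t ⊆ I := hI.out ht0 ht
      have := constant_of_has_deriv_right_zero
        (f := f) (a := t0) (b := t)
        (continuousOn_of_forall_continuousAt fun x hx => hcont x (hsub hx))
        (fun x hx => ((hfd x (hsub ⟨hx.1, hx.2.le⟩)).hasDerivWithinAt))
      exact this t ⟨h, le_rfl⟩
    · have hsub : Icc t t0 ⊆ I := hI.out ht ht0
      have := constant_of_has_deriv_right_zero
        (f := f) (a := t) (b := t0)
        (continuousOn_of_forall_continuousAt fun x hx => hcont x (hsub hx))
        (fun x hx => ((hfd x (hsub ⟨hx.1, hx.2.le⟩)).hasDerivWithinAt))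
      exact (this t0 ⟨h, le_rfl⟩).symm
  intro t ht
  have hft : f t = 1 := by
    rw [key t ht]
    have : f t0 = ‖q t0‖ ^ 2 := by
      simp [hf, Quaternion.self_mul_star, ← Quaternion.normSq_eq_norm_mul_self, sq]
    rw [this, hq0]; norm_num
  have : ‖q t‖ ^ 2 = 1 := by
    rw [← hft]
    simp [hf, Quaternion.self_mul_star, ← Quaternion.normSq_eq_norm_mul_self, sq]
  nlinarith [norm_nonneg (q t)]
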